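/- The O-information satisfies the assembly-path decomposition Ω(X^n) = Σ_{k=2}^{n−1} [ I(X_k; X^{k−1}) − I(X_k; X^{k−1} | X^n_{k+1}) ], where X^{k−1} = (X_1,…,X_{k−1}) and X^n_{k+1} = (X_{k+1},…,X_n). -/

import Mathlib

open Finset

noncomputable section

variable {Ω : Type*} [Fintype Ω]

/-- Probability of the event `A ⊆ Ω` under the probability mass function `p`. -/
def probOf (p : Ω → ℝ) (A : Finset Ω) : ℝ := ∑ ω ∈ A, p ω

/-- Shannon entropy (in bits, i.e. logarithm base 2) of the discrete random
variable `X` defined on the finite probability space with mass function `p`. -/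
def shEnt {S : Type*} [Fintype S] [DecidableEq S] (p : Ω → ℝ) (X : Ω → S) : ℝ :=
  -∑ s : S, probOf p (univ.filter fun ω => X ω = s) *
      Real.logb 2 (probOf p (univ.filter fun ω => X ω = s))

/-- Mutual information `I(X;Y)`. -/
def mutInfo {S T : Type*} [Fintype S] [DecidableEq S] [Fintype T] [DecidableEq T]
    (p : Ω → ℝ) (X : Ω → S) (Y : Ω → T) : ℝ :=
  shEnt p X + shEnt p Y - shEnt p (fun ω => (X ω, Y ω))

/-- Conditional mutual information `I(X;Y∣Z)`. -/
def condMutInfo {S T U : Type*} [Fintype S] [DecidableEq S] [Fintype T] [DecidableEq T]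
    [Fintype U] [DecidableEq U] (p : Ω → ℝ) (X : Ω → S) (Y : Ω → T) (Z : Ω → U) : ℝ :=
  shEnt p (fun ω => (X ω, Z ω)) + shEnt p (fun ω => (Y ω, Z ω))
    - shEnt p (fun ω => (X ω, Y ω, Z ω)) - shEnt p Z

variable {n : ℕ} {S : Fin n → Type*} [∀ i, Fintype (S i)] [∀ i, DecidableEq (S i)]

/-- The sub-vector `X^γ` of the tuple of random variables `X`. -/
def restrict (X : ∀ i, Ω → S i) (γ : Finset (Fin n)) : Ω → ∀ i : γ, S i.1 :=
  fun ω i => X i.1 ω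

/-- Joint Shannon entropy `H(X^γ)` of the sub-vector indexed by `γ`. -/
def subEnt (p : Ω → ℝ) (X : ∀ i, Ω → S i) (γ : Finset (Fin n)) : ℝ :=
  shEnt p (restrict X γ)

/-- Total correlation `C(X^γ)`: sum of marginal entropies minus joint entropy. -/
def totCorr (p : Ω → ℝ) (X : ∀ i, Ω → S i) (γ : Finset (Fin n)) : ℝ :=
  (∑ i ∈ γ, shEnt p (X i)) - subEnt p X γ

/-- Binding entropy `B(X^γ)`: joint entropy minus the sum of the residual
entropies `R_j = H(X_j ∣ X^γ_{-j})` (each conditional entropy being a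
difference of joint entropies). -/
def bindEnt (p : Ω → ℝ) (X : ∀ i, Ω → S i) (γ : Finset (Fin n)) : ℝ :=
  subEnt p X γ - ∑ i ∈ γ, (subEnt p X γ - subEnt p X (γ.erase i))

/-- The O-information `Ω(X^γ) = C(X^γ) - B(X^γ)`. -/
def oInfo (p : Ω → ℝ) (X : ∀ i, Ω → S i) (γ : Finset (Fin n)) : ℝ :=
  totCorr p X γ - bindEnt p X γ


/-! ### Auxiliary lemmas -/

lemma shEnt_sum_image {S' : Type*} [Fintype S'] [DecidableEq S'] (p : Ω → ℝ) (Z : Ω → S') :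
    (∑ s : S', probOf p (univ.filter fun ω => Z ω = s) *
        Real.logb 2 (probOf p (univ.filter fun ω => Z ω = s)))
      = ∑ s ∈ univ.image Z, probOf p (univ.filter fun ω => Z ω = s) *
        Real.logb 2 (probOf p (univ.filter fun ω => Z ω = s)) := by
  refine (Finset.sum_subset (Finset.subset_univ _) ?_).symm
  intro s _ hs
  have : (univ.filter fun ω => Z ω = s) = ∅ := by
    rw [Finset.filter_eq_empty_iff]
    intro ω _ hω
    exact hs (Finset.mem_image.2 ⟨ω, Finset.mem_univ ω, hω⟩)
  rw [this]
  simp [probOf]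

/-- Shannon entropy only depends on the partition induced by the random variable. -/
lemma shEnt_congr {S T : Type*} [Fintype S] [DecidableEq S] [Fintype T] [DecidableEq T]
    (p : Ω → ℝ) (X : Ω → S) (Y : Ω → T)
    (h : ∀ ω ω', X ω = X ω' ↔ Y ω = Y ω') :
    shEnt p X = shEnt p Y := by
  unfold shEnt
  congr 1
  rw [shEnt_sum_image p X, shEnt_sum_image p Y]
  refine Finset.sum_bij' (fun s hs => Y (Finset.mem_image.1 hs).choose)
    (fun t ht => X (Finset.mem_image.1 ht).choose) ?_ ?_ ?_ ?_ ?_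
  · intro s hs
    exact Finset.mem_image.2 ⟨_, Finset.mem_univ _, rfl⟩
  · intro t ht
    exact Finset.mem_image.2 ⟨_, Finset.mem_univ _, rfl⟩
  · intro s hs
    have h1 := (Finset.mem_image.1 hs).choose_spec.2
    have h2 := (Finset.mem_image.1 (Finset.mem_image.2
      ⟨_, Finset.mem_univ _, rfl⟩ : Y (Finset.mem_image.1 hs).choose ∈ univ.image Y)).choose_spec.2
    exact ((h _ _).2 h2).trans h1
  · intro t ht
    have h1 := (Finset.mem_image.1 ht).choose_spec.2
    have h2 := (Finset.mem_image.1 (Finset.mem_image.2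
      ⟨_, Finset.mem_univ _, rfl⟩ : X (Finset.mem_image.1 ht).choose ∈ univ.image X)).choose_spec.2
    exact ((h _ _).1 h2).trans h1
  · intro s hs
    have h1 := (Finset.mem_image.1 hs).choose_spec.2
    have hfib : (univ.filter fun ω => X ω = s)
        = (univ.filter fun ω => Y ω = Y (Finset.mem_image.1 hs).choose) := by
      apply Finset.filter_congr
      intro ω _
      constructor
      · intro hx
        exact (h ω _).1 (hx.trans h1.symm)
      · intro hy
        exact ((h ω _).2 hy).trans h1
    rw [hfib]

lemma restrict_eq_iff (X : ∀ i, Ω → S i) (γ : Finset (Fin n)) (ω ω' : Ω) :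
    restrict X γ ω = restrict X γ ω' ↔ ∀ i ∈ γ, X i ω = X i ω' := by
  constructor
  · intro hr i hi
    exact congrFun hr ⟨i, hi⟩
  · intro hr
    funext i
    exact hr i.1 i.2

lemma shEnt_singleton (p : Ω → ℝ) (X : ∀ i, Ω → S i) (i : Fin n) :
    shEnt p (X i) = subEnt p X {i} := by
  refine shEnt_congr p _ _ fun ω ω' => ?_
  rw [restrict_eq_iff]
  simp

lemma shEnt_pair_restrict (p : Ω → ℝ) (X : ∀ i, Ω → S i) (k : Fin n) (γ : Finset (Fin n)) :
    shEnt p (fun ω => (X k ω, restrict X γ ω)) = subEnt p X (insert k γ) := by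
  refine shEnt_congr p _ _ fun ω ω' => ?_
  simp only [Prod.mk.injEq, restrict_eq_iff, Finset.forall_mem_insert]

lemma shEnt_union_restrict (p : Ω → ℝ) (X : ∀ i, Ω → S i) (γ₁ γ₂ : Finset (Fin n)) :
    shEnt p (fun ω => (restrict X γ₁ ω, restrict X γ₂ ω)) = subEnt p X (γ₁ ∪ γ₂) := by
  refine shEnt_congr p _ _ fun ω ω' => ?_
  simp only [Prod.mk.injEq, restrict_eq_iff, Finset.forall_mem_union]

lemma shEnt_triple_restrict (p : Ω → ℝ) (X : ∀ i, Ω → S i) (k : Fin n)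
    (γ₁ γ₂ : Finset (Fin n)) :
    shEnt p (fun ω => (X k ω, restrict X γ₁ ω, restrict X γ₂ ω))
      = subEnt p X (insert k (γ₁ ∪ γ₂)) := by
  refine shEnt_congr p _ _ fun ω ω' => ?_
  simp only [Prod.mk.injEq, restrict_eq_iff, Finset.forall_mem_insert, Finset.forall_mem_union]

/-- The prefix set `{j : j < m}`. -/
def pfSet (n m : ℕ) : Finset (Fin n) := univ.filter (fun j => (j : ℕ) < m)

/-- The suffix set `{j : m ≤ j}`. -/
def sfSet (n m : ℕ) : Finset (Fin n) := univ.filter (fun j => m ≤ (j : ℕ))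

/-- the assembly-path decomposition of the O-information,
`Ω(X^n) = Σ_{k=2}^{n-1} [I(X_k; X^{k-1}) - I(X_k; X^{k-1} ∣ X^n_{k+1})]`
(indices here are 0-based: the sum runs over all `k` other than the first
index `0` and the last index `n-1`; `X^{k-1}` is the joint vector of the
variables with index `< k` and `X^n_{k+1}` that of the variables with
index `> k`). -/
theorem oInfo_assembly_decomposition
    (hn : 2 ≤ n) (p : Ω → ℝ) (hp : ∀ ω, 0 ≤ p ω) (hp1 : ∑ ω, p ω = 1)
    (X : ∀ i, Ω → S i) :
    oInfo p X Finset.univ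
      = ∑ k ∈ (Finset.univ.erase (⟨0, by omega⟩ : Fin n)).erase ⟨n - 1, by omega⟩,
          (mutInfo p (X k) (restrict X (Finset.univ.filter fun j => j < k))
            - condMutInfo p (X k)
                (restrict X (Finset.univ.filter fun j => j < k))
                (restrict X (Finset.univ.filter fun j => k < j))) := by
  classical
  have h0 : 0 < n := by omega
  have h1 : n - 1 < n := by omega
  set k0 : Fin n := ⟨0, h0⟩ with hk0def
  set kl : Fin n := ⟨n - 1, h1⟩ with hkldef
  show oInfo p X Finset.univ
      = ∑ k ∈ (Finset.univ.erase k0).erase kl,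
          (mutInfo p (X k) (restrict X (Finset.univ.filter fun j => j < k))
            - condMutInfo p (X k)
                (restrict X (Finset.univ.filter fun j => j < k))
                (restrict X (Finset.univ.filter fun j => k < j)))
  set E : Finset (Fin n) → ℝ := fun γ => subEnt p X γ with hEdef
  -- rewrite each summand in terms of `E`
  have hterm : ∀ k : Fin n,
      (mutInfo p (X k) (restrict X (Finset.univ.filter fun j => j < k))
        - condMutInfo p (X k)
            (restrict X (Finset.univ.filter fun j => j < k))
            (restrict X (Finset.univ.filter fun j => k < j)))
      = shEnt p (X k)
        + (E univ - E (univ.erase k))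
        + (E (pfSet n (k : ℕ)) - E (pfSet n ((k : ℕ) + 1)))
        + (E (sfSet n ((k : ℕ) + 1)) - E (sfSet n (k : ℕ))) := by
    intro k
    have e1 : insert k (Finset.univ.filter fun j => j < k) = pfSet n ((k : ℕ) + 1) := by
      ext j
      simp only [pfSet, Finset.mem_insert, Finset.mem_filter, Finset.mem_univ, true_and,
        Fin.lt_def, Fin.ext_iff]
      omega
    have e2 : (Finset.univ.filter fun j => j < k) = pfSet n (k : ℕ) := by
      ext j
      simp only [pfSet, Finset.mem_filter, Finset.mem_univ, true_and, Fin.lt_def]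
    have e3 : insert k (Finset.univ.filter fun j => k < j) = sfSet n (k : ℕ) := by
      ext j
      simp only [sfSet, Finset.mem_insert, Finset.mem_filter, Finset.mem_univ, true_and,
        Fin.lt_def, Fin.ext_iff]
      omega
    have e4 : (Finset.univ.filter fun j => k < j) = sfSet n ((k : ℕ) + 1) := by
      ext j
      simp only [sfSet, Finset.mem_filter, Finset.mem_univ, true_and, Fin.lt_def]
      omega
    have e5 : (Finset.univ.filter fun j => j < k) ∪ (Finset.univ.filter fun j => k < j)
        = univ.erase k := by
      ext j
      simp only [Finset.mem_union, Finset.mem_filter, Finset.mem_univ, true_and,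
        Finset.mem_erase, ne_eq, and_true, Fin.lt_def, Fin.ext_iff]
      omega
    have e6 : insert k ((Finset.univ.filter fun j => j < k)
        ∪ (Finset.univ.filter fun j => k < j)) = univ := by
      ext j
      simp only [Finset.mem_insert, Finset.mem_union, Finset.mem_filter, Finset.mem_univ,
        true_and, Fin.lt_def, Fin.ext_iff, iff_true]
      omega
    unfold mutInfo condMutInfo
    rw [shEnt_pair_restrict p X k, shEnt_pair_restrict p X k, shEnt_triple_restrict p X k,
      shEnt_union_restrict p X]
    show shEnt p (X k) + E _ - E _ - (E _ + E _ - E _ - E _) = _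
    rw [e6, e5, e1, e3, e2, e4]
    ring
  rw [Finset.sum_congr rfl (fun k _ => hterm k)]
  -- split the sum on the right
  have hsplit : ∀ s : Finset (Fin n), (∑ k ∈ s,
      (shEnt p (X k)
        + (E univ - E (univ.erase k))
        + (E (pfSet n (k : ℕ)) - E (pfSet n ((k : ℕ) + 1)))
        + (E (sfSet n ((k : ℕ) + 1)) - E (sfSet n (k : ℕ)))))
      = (∑ k ∈ s, shEnt p (X k)) + (∑ k ∈ s, (E univ - E (univ.erase k)))
        + (∑ k ∈ s, (E (pfSet n (k : ℕ)) - E (pfSet n ((k : ℕ) + 1))))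
        + (∑ k ∈ s, (E (sfSet n ((k : ℕ) + 1)) - E (sfSet n (k : ℕ)))) := by
    intro s
    rw [← Finset.sum_add_distrib, ← Finset.sum_add_distrib, ← Finset.sum_add_distrib]
  rw [hsplit]
  -- reindex sums over the interior to sums over `Ico 1 (n-1)`
  have hmemInt : ∀ k : Fin n, k ∈ (Finset.univ.erase k0).erase kl
      ↔ (0 < (k : ℕ) ∧ (k : ℕ) < n - 1) := by
    intro k
    simp only [Finset.mem_erase, Finset.mem_univ, and_true, hk0def, hkldef, Fin.ext_iff,
      Fin.val_mk, ne_eq]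
    have := k.isLt
    omega
  have hre : ∀ g : ℕ → ℝ, (∑ k ∈ (Finset.univ.erase k0).erase kl, g (k : ℕ))
      = ∑ m ∈ Finset.Ico 1 (n - 1), g m := by
    intro g
    refine Finset.sum_bij' (fun k _ => (k : ℕ))
      (fun m hm => (⟨m, by have := (Finset.mem_Ico.1 hm).2; omega⟩ : Fin n)) ?_ ?_ ?_ ?_ ?_
    · intro k hk
      show (k : ℕ) ∈ Finset.Ico 1 (n - 1)
      rw [Finset.mem_Ico]
      have := (hmemInt k).1 hk
      omega
    · intro m hm
      rw [hmemInt]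
      have := Finset.mem_Ico.1 hm
      constructor
      · exact this.1
      · simpa using this.2
    · intro k hk
      rfl
    · intro m hm
      rfl
    · intro k hk
      rfl
  have tel : ∀ A : ℕ → ℝ, (∑ m ∈ Finset.Ico 1 (n - 1), (A m - A (m + 1)))
      = A 1 - A (n - 1) := by
    intro A
    rw [Finset.sum_Ico_eq_sum_range]
    have h2 : n - 1 - 1 = n - 2 := by omega
    rw [h2]
    have := Finset.sum_range_sub' (fun i => A (1 + i)) (n - 2)
    have harg : 1 + (n - 2) = n - 1 := by omega
    rw [harg] at this
    simpa [add_assoc] using this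
  have tel' : ∀ A : ℕ → ℝ, (∑ m ∈ Finset.Ico 1 (n - 1), (A (m + 1) - A m))
      = A (n - 1) - A 1 := by
    intro A
    have := tel A
    have h2 : (∑ m ∈ Finset.Ico 1 (n - 1), (A (m + 1) - A m))
        = - ∑ m ∈ Finset.Ico 1 (n - 1), (A m - A (m + 1)) := by
      rw [← Finset.sum_neg_distrib]
      apply Finset.sum_congr rfl
      intro m _
      ring
    rw [h2, this]
    ring
  have hre1 : (∑ k ∈ (Finset.univ.erase k0).erase kl,
      (E (pfSet n (k : ℕ)) - E (pfSet n ((k : ℕ) + 1))))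
      = E (pfSet n 1) - E (pfSet n (n - 1)) := by
    rw [hre (fun m => E (pfSet n m) - E (pfSet n (m + 1)))]
    exact tel (fun m => E (pfSet n m))
  have hre2 : (∑ k ∈ (Finset.univ.erase k0).erase kl,
      (E (sfSet n ((k : ℕ) + 1)) - E (sfSet n (k : ℕ))))
      = E (sfSet n (n - 1)) - E (sfSet n 1) := by
    rw [hre (fun m => E (sfSet n (m + 1)) - E (sfSet n m))]
    exact tel' (fun m => E (sfSet n m))
  rw [hre1, hre2]
  -- split the sums over `univ` on the left
  have hklmem : kl ∈ Finset.univ.erase k0 := by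
    rw [Finset.mem_erase]
    refine ⟨?_, Finset.mem_univ _⟩
    rw [hk0def, hkldef, ne_eq, Fin.ext_iff]
    simp only [Fin.val_mk]
    omega
  have hsplitU : ∀ f : Fin n → ℝ, (∑ i : Fin n, f i)
      = f k0 + f kl + ∑ k ∈ (Finset.univ.erase k0).erase kl, f k := by
    intro f
    rw [← Finset.add_sum_erase _ f (Finset.mem_univ k0), ← Finset.add_sum_erase _ f hklmem]
    ring
  -- endpoint identifications
  have hA : shEnt p (X k0) = E (pfSet n 1) := by
    rw [shEnt_singleton p X k0]
    show E {k0} = _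
    congr 1
    ext j
    simp only [pfSet, Finset.mem_singleton, Finset.mem_filter, Finset.mem_univ, true_and,
      hk0def, Fin.ext_iff, Fin.val_mk]
    omega
  have hB : shEnt p (X kl) = E (sfSet n (n - 1)) := by
    rw [shEnt_singleton p X kl]
    show E {kl} = _
    congr 1
    ext j
    have := j.isLt
    simp only [sfSet, Finset.mem_singleton, Finset.mem_filter, Finset.mem_univ, true_and,
      hkldef, Fin.ext_iff, Fin.val_mk]
    omega
  have hC : Finset.univ.erase k0 = sfSet n 1 := by
    ext j
    simp only [sfSet, Finset.mem_erase, Finset.mem_univ, and_true, true_and,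
      Finset.mem_filter, hk0def, Fin.ext_iff, ne_eq, Fin.val_mk]
    omega
  have hD : Finset.univ.erase kl = pfSet n (n - 1) := by
    ext j
    have := j.isLt
    simp only [pfSet, Finset.mem_erase, Finset.mem_univ, and_true, true_and,
      Finset.mem_filter, hkldef, Fin.ext_iff, ne_eq, Fin.val_mk]
    omega
  -- expand the left-hand side
  unfold oInfo totCorr bindEnt
  have hLH : (∑ i ∈ Finset.univ, shEnt p (X i))
      = shEnt p (X k0) + shEnt p (X kl)
        + ∑ k ∈ (Finset.univ.erase k0).erase kl, shEnt p (X k) :=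
    hsplitU _
  have hLE : (∑ i ∈ Finset.univ, (subEnt p X Finset.univ - subEnt p X (Finset.univ.erase i)))
      = (E univ - E (Finset.univ.erase k0)) + (E univ - E (Finset.univ.erase kl))
        + ∑ k ∈ (Finset.univ.erase k0).erase kl, (E univ - E (univ.erase k)) :=
    hsplitU _
  rw [hLH, hLE, hA, hB, hC, hD]
  show _ - E univ - (E univ - _) = _
  linarith [hre1]
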